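/- Let a, σ̃ > 0 and b ∈ ℝ. Suppose H : ℝ → ℝ is differentiable, H(r) > 0 for all r ∈ ℝ, H satisfies the Riccati equation (σ̃²/2)·H'(r) = b − a(b − r)·H(r) − (σ̃²/2)·H(r)² for all r, and H(r) → 0 as r → −∞. Then H'(r) > 0 for all r ∈ ℝ; in particular, H is strictly increasing on ℝ. -/

import Mathlib

open Real Filter Set

/-- If `g x = 0` and `g` has positive derivative at `x`, then `g < 0` just left of `x`. -/
lemma neg_left_of_pos_deriv {g : ℝ → ℝ} {g' x : ℝ} (h : HasDerivAt g g' x)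
    (hx : g x = 0) (hg' : 0 < g') : ∀ᶠ y in nhdsWithin x (Iio x), g y < 0 := by
  have hslope : Tendsto (slope g x) (nhdsWithin x {x}ᶜ) (nhds g') :=
    hasDerivAt_iff_tendsto_slope.mp h
  have hev : ∀ᶠ y in nhdsWithin x {x}ᶜ, 0 < slope g x y :=
    hslope.eventually (eventually_gt_nhds hg')
  have hmono : nhdsWithin x (Iio x) ≤ nhdsWithin x {x}ᶜ :=
    nhdsWithin_mono x (fun y hy => ne_of_lt hy)
  filter_upwards [hmono hev, self_mem_nhdsWithin] with y hy hylt
  have hylt' : (y : ℝ) < x := hylt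
  have hsl : 0 < (g y - g x) / (y - x) := by
    simpa [slope_def_field] using hy
  have hyx : y - x < 0 := by linarith
  rcases div_pos_iff.mp hsl with ⟨h1, h2⟩ | ⟨h1, h2⟩
  · linarith
  · linarith

/-- If `g x = 0` and `g` has positive derivative at `x`, then `g > 0` just right of `x`. -/
lemma pos_right_of_pos_deriv {g : ℝ → ℝ} {g' x : ℝ} (h : HasDerivAt g g' x)
    (hx : g x = 0) (hg' : 0 < g') : ∀ᶠ y in nhdsWithin x (Ioi x), 0 < g y := by
  have hslope : Tendsto (slope g x) (nhdsWithin x {x}ᶜ) (nhds g') :=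
    hasDerivAt_iff_tendsto_slope.mp h
  have hev : ∀ᶠ y in nhdsWithin x {x}ᶜ, 0 < slope g x y :=
    hslope.eventually (eventually_gt_nhds hg')
  have hmono : nhdsWithin x (Ioi x) ≤ nhdsWithin x {x}ᶜ :=
    nhdsWithin_mono x (fun y hy => ne_of_gt hy)
  filter_upwards [hmono hev, self_mem_nhdsWithin] with y hy hygt
  have hygt' : x < y := hygt
  have hsl : 0 < (g y - g x) / (y - x) := by
    simpa [slope_def_field] using hy
  have hyx : 0 < y - x := by linarith
  rcases div_pos_iff.mp hsl with ⟨h1, h2⟩ | ⟨h1, h2⟩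
  · linarith
  · linarith

theorem riccati_solution_strictMono (a σt b : ℝ) (ha : 0 < a) (hσ : 0 < σt)
    (H H' : ℝ → ℝ)
    (hd : ∀ r : ℝ, HasDerivAt H (H' r) r)
    (hpos : ∀ r : ℝ, 0 < H r)
    (hric : ∀ r : ℝ,
      σt ^ 2 / 2 * H' r = b - a * (b - r) * H r - σt ^ 2 / 2 * (H r) ^ 2)
    (hlim : Tendsto H atBot (nhds 0)) :
    (∀ r : ℝ, 0 < H' r) ∧ StrictMono H := by
  have hσ2 : (0:ℝ) < σt ^ 2 := by positivity
  have hσ2' : σt ^ 2 ≠ 0 := ne_of_gt hσ2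
  -- closed formula for H'
  set f : ℝ → ℝ := fun r => 2 / σt ^ 2 * (b - a * (b - r) * H r - σt ^ 2 / 2 * (H r) ^ 2)
    with hf
  have hH'eq : ∀ r, H' r = f r := by
    intro r
    have := hric r
    simp only [hf]
    field_simp
    linarith
  -- continuity of H
  have hHc : Continuous H := by
    rw [continuous_iff_continuousAt]; exact fun r => (hd r).continuousAt
  -- H' is differentiable, with explicit derivative
  have hd2 : ∀ r, HasDerivAt H'
      (2 / σt ^ 2 * (a * H r - (a * (b - r) + σt ^ 2 * H r) * H' r)) r := by
    intro r
    have h1 : HasDerivAt (fun x : ℝ => b - x) (-1) r := by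
      simpa using (hasDerivAt_id r).const_sub b
    have h2 : HasDerivAt (fun x : ℝ => a * (b - x) * H x)
        ((a * (-1)) * H r + (a * (b - r)) * H' r) r := by
      exact (h1.const_mul a).mul (hd r)
    have h3 : HasDerivAt (fun x : ℝ => (H x) ^ 2) ((2 : ℕ) * H r ^ 1 * H' r) r :=
      (hd r).pow 2
    have h4 : HasDerivAt (fun x : ℝ => σt ^ 2 / 2 * (H x) ^ 2)
        (σt ^ 2 / 2 * ((2 : ℕ) * H r ^ 1 * H' r)) r := h3.const_mul _
    have h5 : HasDerivAt (fun x : ℝ => b - a * (b - x) * H x - σt ^ 2 / 2 * (H x) ^ 2)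
        (0 - ((a * (-1)) * H r + (a * (b - r)) * H' r)
          - σt ^ 2 / 2 * ((2 : ℕ) * H r ^ 1 * H' r)) r :=
      ((hasDerivAt_const r b).sub h2).sub h4
    have h6 : HasDerivAt f
        (2 / σt ^ 2 * (0 - ((a * (-1)) * H r + (a * (b - r)) * H' r)
          - σt ^ 2 / 2 * ((2 : ℕ) * H r ^ 1 * H' r))) r := h5.const_mul _
    have hev : f =ᶠ[nhds r] H' := Filter.Eventually.of_forall (fun x => (hH'eq x).symm)
    have h7 := (hev.hasDerivAt_iff).mp h6
    convert h7 using 1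
    · rfl
    · rfl
    push_cast
    ring
  -- continuity of H'
  have hH'c : Continuous H' := by
    rw [continuous_iff_continuousAt]; exact fun r => (hd2 r).continuousAt
  -- derivative of H' is positive at zeros of H'
  have hkey : ∀ s, H' s = 0 → HasDerivAt H' (2 / σt ^ 2 * (a * H s)) s ∧
      0 < 2 / σt ^ 2 * (a * H s) := by
    intro s hs
    constructor
    · have := hd2 s
      rw [hs] at this
      simpa using this
    · have := hpos s
      positivity
  -- Main claim: H' is everywhere positive
  have key : ∀ r, 0 < H' r := by
    intro r0
    by_contra hle
    push_neg at hle
    -- get a point where H' is strictly negative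
    obtain ⟨r1, hr1⟩ : ∃ r1, H' r1 < 0 := by
      rcases lt_or_eq_of_le hle with h | h
      · exact ⟨r0, h⟩
      · obtain ⟨hder, hdpos⟩ := hkey r0 h
        have := neg_left_of_pos_deriv hder h hdpos
        rcases this.exists with ⟨y, hy⟩
        exact ⟨y, hy⟩
    -- H' is negative on all of (-∞, r1]
    have hneg : ∀ r ≤ r1, H' r < 0 := by
      intro r2 hr2
      by_contra h
      push_neg at h
      have hr2lt : r2 < r1 := lt_of_le_of_ne hr2 (by rintro rfl; linarith)
      set S : Set ℝ := Icc r2 r1 ∩ {r | 0 ≤ H' r} with hS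
      have hSc : IsClosed S := isClosed_Icc.inter (isClosed_le continuous_const hH'c)
      have hne : S.Nonempty := ⟨r2, ⟨le_refl _, hr2⟩, h⟩
      have hbdd : BddAbove S := ⟨r1, fun x hx => hx.1.2⟩
      set s := sSup S with hsdef
      have hsS : s ∈ S := hSc.csSup_mem hne hbdd
      have hs0 : 0 ≤ H' s := hsS.2
      have hsr1 : s < r1 := lt_of_le_of_ne hsS.1.2 (fun he => by rw [he] at hs0; linarith)
      have hafter : ∀ x, s < x → x ≤ r1 → H' x < 0 := by
        intro x h1 h2
        by_contra hx
        push_neg at hx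
        have hxS : x ∈ S := ⟨⟨le_trans hsS.1.1 (le_of_lt h1), h2⟩, hx⟩
        have := le_csSup hbdd hxS
        linarith
      -- limit from the right forces H' s ≤ 0
      have hle0 : H' s ≤ 0 := by
        have htend : Tendsto H' (nhdsWithin s (Ioi s)) (nhds (H' s)) :=
          (hH'c.tendsto s).mono_left nhdsWithin_le_nhds
        have hevle : ∀ᶠ x in nhdsWithin s (Ioi s), H' x ≤ 0 := by
          filter_upwards [Ioo_mem_nhdsGT_of_mem ⟨le_refl s, hsr1⟩] with x hx
          exact le_of_lt (hafter x hx.1 (le_of_lt hx.2))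
        exact le_of_tendsto htend hevle
      have hsz : H' s = 0 := le_antisymm hle0 hs0
      obtain ⟨hder, hdpos⟩ := hkey s hsz
      have hright := pos_right_of_pos_deriv hder hsz hdpos
      have : ∀ᶠ x in nhdsWithin s (Ioi s), False := by
        filter_upwards [hright, Ioo_mem_nhdsGT_of_mem ⟨le_refl s, hsr1⟩] with x hx1 hx2
        exact absurd hx1 (not_lt.mpr (le_of_lt (hafter x hx2.1 (le_of_lt hx2.2))))
      rcases this.exists with ⟨_, hfalse⟩
      exact hfalse
    -- so H is strictly decreasing on (-∞, r1]
    have hanti : StrictAntiOn H (Iic r1) := by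
      apply strictAntiOn_of_deriv_neg (convex_Iic r1) (hHc.continuousOn)
      intro x hx
      rw [interior_Iic] at hx
      rw [(hd x).deriv]
      exact hneg x (le_of_lt hx)
    -- contradiction with the limit at -∞
    have hev1 : ∀ᶠ r in atBot, H r < H r1 := hlim.eventually (eventually_lt_nhds (hpos r1))
    have hev2 : ∀ᶠ r in atBot, r < r1 := eventually_lt_atBot r1
    rcases (hev1.and hev2).exists with ⟨r, hra, hrb⟩
    have := hanti (le_of_lt hrb : r ∈ Iic r1) (le_refl r1 : r1 ∈ Iic r1) hrb
    linarith
  refine ⟨key, ?_⟩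
  apply strictMono_of_deriv_pos
  intro x
  rw [(hd x).deriv]
  exact key x
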